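/- Every proper monomial ideal I in the polynomial ring S = k[x_1,…,x_n] over a field k admits a finite Stanley decomposition of S/I. -/

import Mathlib

open MvPolynomial

/-- `I` is a monomial ideal: it is generated by a set of monomials `x^u`. -/
def IsMonomialIdeal {k : Type} [Field k] {n : ℕ} (I : Ideal (MvPolynomial (Fin n) k)) : Prop :=
  ∃ G : Set (Fin n →₀ ℕ), I = Ideal.span ((fun u => (monomial u (1 : k))) '' G)

/-- The set of exponent vectors of monomials in the pair `(x^u, σ)`, namely all
`x^{u+v}` with `supp v ⊆ σ`. -/
def stanleyPairSet {n : ℕ} (u : Fin n →₀ ℕ) (σ : Finset (Fin n)) : Set (Fin n →₀ ℕ) :=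
  {w | ∃ v : Fin n →₀ ℕ, (∀ i, v i ≠ 0 → i ∈ σ) ∧ w = u + v}

/-- A Stanley decomposition of `S/I`: a finite set of pairs `(x^u, σ)` whose associated
monomial sets are pairwise disjoint and whose union is exactly the set of monomials not in `I`. -/
def IsStanleyDecomp {k : Type} [Field k] {n : ℕ} (I : Ideal (MvPolynomial (Fin n) k))
    (𝔖 : Finset ((Fin n →₀ ℕ) × Finset (Fin n))) : Prop :=
  (∀ p ∈ 𝔖, ∀ q ∈ 𝔖, p ≠ q → Disjoint (stanleyPairSet p.1 p.2) (stanleyPairSet q.1 q.2)) ∧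
  (⋃ p ∈ (𝔖 : Set ((Fin n →₀ ℕ) × Finset (Fin n))), stanleyPairSet p.1 p.2)
      = {w | monomial w (1 : k) ∉ I}

/-- Stabilization of the slice chain, via Dickson's lemma (`Finsupp.isPWO`). -/
lemma stanley_chain_stabilizes {n : ℕ} (L : Set (Fin n →₀ ℕ))
    (hdown : ∀ w v : Fin n →₀ ℕ, w + v ∈ L → w ∈ L) (i : Fin n) :
    ∃ N : ℕ, ∀ j, N ≤ j → ∀ w : Fin n →₀ ℕ,
      (w + Finsupp.single i j ∈ L ↔ w + Finsupp.single i N ∈ L) := by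
  classical
  -- downward closure with respect to ≤
  have hdown' : ∀ w w' : Fin n →₀ ℕ, w ≤ w' → w' ∈ L → w ∈ L := by
    intro w w' hle hw'
    obtain ⟨c, rfl⟩ := exists_add_of_le hle
    exact hdown w c hw'
  -- the chain is decreasing
  have hchain : ∀ j j' : ℕ, j ≤ j' → ∀ w : Fin n →₀ ℕ,
      w + Finsupp.single i j' ∈ L → w + Finsupp.single i j ∈ L := by
    intro j j' hjj w hw
    refine hdown' _ _ ?_ hw
    intro l
    simp only [Finsupp.add_apply, Finsupp.single_apply]
    split <;> omega
  -- it suffices to find a point where consecutive slices agree forever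
  suffices h : ∃ N : ℕ, ∀ j, N ≤ j → ∀ w : Fin n →₀ ℕ,
      (w + Finsupp.single i (j + 1) ∈ L ↔ w + Finsupp.single i j ∈ L) by
    obtain ⟨N, hN⟩ := h
    refine ⟨N, fun j hj => ?_⟩
    induction j, hj using Nat.le_induction with
    | base => intro w; rfl
    | succ m hm ihm => intro w; rw [hN m hm w, ihm w]
  by_contra hcon
  push_neg at hcon
  -- extract strictly increasing indices with bad witnesses
  have hbad : ∀ N : ℕ, ∃ j, N ≤ j ∧ ∃ w : Fin n →₀ ℕ,
      w + Finsupp.single i j ∈ L ∧ w + Finsupp.single i (j + 1) ∉ L := by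
    intro N
    obtain ⟨j, hj, w, hw⟩ := hcon N
    refine ⟨j, hj, w, ?_⟩
    rcases hw with ⟨hA, hB⟩ | ⟨hA, hB⟩
    · exact absurd (hchain j (j + 1) (Nat.le_succ j) w hA) hB
    · exact ⟨hB, hA⟩
  let g : ℕ → ℕ := fun k => Nat.rec (hbad 0).choose (fun _ prev => (hbad (prev + 1)).choose) k
  have hg0 : ∀ k, ∃ w : Fin n →₀ ℕ,
      w + Finsupp.single i (g k) ∈ L ∧ w + Finsupp.single i (g k + 1) ∉ L := by
    intro k
    cases k with
    | zero => exact (hbad 0).choose_spec.2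
    | succ m => exact (hbad (g m + 1)).choose_spec.2
  have hgmono : StrictMono g := by
    apply strictMono_nat_of_lt_succ
    intro m
    have := (hbad (g m + 1)).choose_spec.1
    simpa [g] using this
  choose f hf1 hf2 using hg0
  obtain ⟨m, m', hmm, hle⟩ := wellQuasiOrdered_le (α := Fin n →₀ ℕ) f
  have hgm : g m + 1 ≤ g m' := hgmono hmm
  apply hf2 m
  refine hdown' _ _ ?_ (hf1 m')
  intro l
  have := hle l
  simp only [Finsupp.add_apply, Finsupp.single_apply] at *
  split <;> omega

/-- The key combinatorial lemma: every "downward closed" set of exponent vectors supported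
inside a finite set `T` of coordinates admits a finite Stanley-type partition using only
coordinates from `T`. -/
lemma stanley_aux {n : ℕ} (T : Finset (Fin n)) :
    ∀ L : Set (Fin n →₀ ℕ),
    (∀ w ∈ L, ∀ j, w j ≠ 0 → j ∈ T) →
    (∀ w v : Fin n →₀ ℕ, w + v ∈ L → w ∈ L) →
    ∃ 𝔖 : Finset ((Fin n →₀ ℕ) × Finset (Fin n)),
      (∀ p ∈ 𝔖, (∀ j, p.1 j ≠ 0 → j ∈ T) ∧ p.2 ⊆ T) ∧
      (∀ p ∈ 𝔖, ∀ q ∈ 𝔖, p ≠ q →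
          Disjoint (stanleyPairSet p.1 p.2) (stanleyPairSet q.1 q.2)) ∧
      (⋃ p ∈ (𝔖 : Set ((Fin n →₀ ℕ) × Finset (Fin n))), stanleyPairSet p.1 p.2) = L := by
  classical
  induction T using Finset.induction with
  | empty =>
    intro L hsupp _
    have hL : L ⊆ {0} := by
      intro w hw
      have : w = 0 := by
        ext l
        by_contra h
        exact absurd (hsupp w hw l h) (by simp)
      simp [this]
    by_cases h0 : (0 : Fin n →₀ ℕ) ∈ L
    · refine ⟨{((0 : Fin n →₀ ℕ), (∅ : Finset (Fin n)))}, ?_, ?_, ?_⟩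
      · intro p hp
        simp only [Finset.mem_singleton] at hp
        subst hp
        simp
      · intro p hp q hq hpq
        simp only [Finset.mem_singleton] at hp hq
        exact absurd (hp.trans hq.symm) hpq
      · ext w
        simp only [Finset.coe_singleton, Set.mem_iUnion, Set.mem_singleton_iff,
          exists_prop, exists_eq_left]
        constructor
        · rintro ⟨v, hv, rfl⟩
          have : v = 0 := by
            ext l
            by_contra h
            exact absurd (hv l h) (by simp)
          simp [stanleyPairSet, this]
          simpa [this] using h0
        · intro hw
          have hw0 : w = 0 := hL hw
          exact ⟨0, by simp, by simp [hw0]⟩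
    · refine ⟨∅, by simp, by simp, ?_⟩
      ext w
      constructor
      · intro hw
        obtain ⟨p, hp, -⟩ := Set.mem_iUnion₂.mp hw
        simp at hp
      · intro hw
        have hw0 : w = 0 := hL hw
        subst hw0
        exact absurd hw h0
  | @insert i T' hi ih =>
    intro L hsupp hdown
    -- the slices along coordinate i
    set M : ℕ → Set (Fin n →₀ ℕ) :=
      fun j => {w | (∀ l, w l ≠ 0 → l ∈ T') ∧ w + Finsupp.single i j ∈ L} with hM
    have hMsupp : ∀ j, ∀ w ∈ M j, ∀ l, w l ≠ 0 → l ∈ T' := fun j w hw => hw.1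
    have hMdown : ∀ j, ∀ w v : Fin n →₀ ℕ, w + v ∈ M j → w ∈ M j := by
      intro j w v hwv
      constructor
      · intro l hl
        refine hwv.1 l ?_
        simp only [Finsupp.add_apply]
        omega
      · refine hdown _ v ?_
        rw [add_right_comm]
        exact hwv.2
    obtain ⟨N, hN⟩ := stanley_chain_stabilizes L hdown i
    have key : ∀ j : ℕ, ∃ S : Finset ((Fin n →₀ ℕ) × Finset (Fin n)),
        (∀ p ∈ S, (∀ l, p.1 l ≠ 0 → l ∈ T') ∧ p.2 ⊆ T') ∧
        (∀ p ∈ S, ∀ q ∈ S, p ≠ q →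
            Disjoint (stanleyPairSet p.1 p.2) (stanleyPairSet q.1 q.2)) ∧
        (⋃ p ∈ (S : Set ((Fin n →₀ ℕ) × Finset (Fin n))), stanleyPairSet p.1 p.2) = M j :=
      fun j => ih (M j) (hMsupp j) (hMdown j)
    choose S hS1 hS2 hS3 using key
    -- the combined decomposition
    refine ⟨((Finset.range N).biUnion fun j =>
        (S j).image fun p => (p.1 + Finsupp.single i j, p.2)) ∪
        ((S N).image fun p => (p.1 + Finsupp.single i N, insert i p.2)), ?_, ?_, ?_⟩
    -- basic facts about pairs in the pieces
    · intro p hp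
      simp only [Finset.mem_union, Finset.mem_biUnion, Finset.mem_range,
        Finset.mem_image] at hp
      rcases hp with ⟨j, _, p0, hp0, rfl⟩ | ⟨p0, hp0, rfl⟩
      · constructor
        · intro l hl
          simp only [Finsupp.add_apply, Finsupp.single_apply] at hl
          by_cases hli : l = i
          · simp [hli]
          · simp only [hli, if_neg (Ne.symm hli)] at hl
            exact Finset.mem_insert_of_mem ((hS1 j p0 hp0).1 l (by omega))
        · exact (hS1 j p0 hp0).2.trans (Finset.subset_insert i T')
      · constructor
        · intro l hl
          simp only [Finsupp.add_apply, Finsupp.single_apply] at hl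
          by_cases hli : l = i
          · simp [hli]
          · simp only [hli, if_neg (Ne.symm hli)] at hl
            exact Finset.mem_insert_of_mem ((hS1 N p0 hp0).1 l (by omega))
        · exact Finset.insert_subset_insert i (hS1 N p0 hp0).2
    -- disjointness
    · -- membership lemmas
      have zero_i : ∀ j, ∀ p0 ∈ S j, p0.1 i = 0 ∧ i ∉ p0.2 := by
        intro j p0 hp0
        constructor
        · by_contra h
          exact hi ((hS1 j p0 hp0).1 i h)
        · intro h
          exact hi ((hS1 j p0 hp0).2 h)
      have memF : ∀ (j : ℕ) (p0 : (Fin n →₀ ℕ) × Finset (Fin n)), p0 ∈ S j →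
          ∀ w ∈ stanleyPairSet (p0.1 + Finsupp.single i j) p0.2,
          w i = j ∧ w.erase i ∈ stanleyPairSet p0.1 p0.2 := by
        intro j p0 hp0 w hw
        obtain ⟨v, hv, rfl⟩ := hw
        have hvi : v i = 0 := by
          by_contra h
          exact hi ((hS1 j p0 hp0).2 (hv i h))
        have hui : p0.1 i = 0 := (zero_i j p0 hp0).1
        constructor
        · simp [Finsupp.add_apply, Finsupp.single_apply, hvi, hui]
        · refine ⟨v, hv, ?_⟩
          ext l
          by_cases hli : l = i
          · subst hli
            simp [Finsupp.erase_apply, hui, hvi]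
          · simp [Finsupp.erase_apply, hli, Finsupp.add_apply, Finsupp.single_apply,
              Ne.symm hli]
      have memG : ∀ (p0 : (Fin n →₀ ℕ) × Finset (Fin n)), p0 ∈ S N →
          ∀ w ∈ stanleyPairSet (p0.1 + Finsupp.single i N) (insert i p0.2),
          N ≤ w i ∧ w.erase i ∈ stanleyPairSet p0.1 p0.2 := by
        intro p0 hp0 w hw
        obtain ⟨v, hv, rfl⟩ := hw
        have hui : p0.1 i = 0 := (zero_i N p0 hp0).1
        constructor
        · simp [Finsupp.add_apply, Finsupp.single_apply, hui]
        · refine ⟨v.erase i, ?_, ?_⟩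
          · intro l hl
            rw [Finsupp.erase_apply] at hl
            by_cases hli : l = i
            · simp [hli] at hl
            · rcases Finset.mem_insert.mp (hv l (by simpa [hli] using hl)) with h | h
              · exact absurd h hli
              · exact h
          · ext l
            by_cases hli : l = i
            · subst hli
              simp [Finsupp.erase_apply, hui]
            · simp [Finsupp.erase_apply, hli, Finsupp.add_apply, Finsupp.single_apply,
                Ne.symm hli]
      intro p hp q hq hpq
      rw [Set.disjoint_left]
      intro w hwp hwq
      simp only [Finset.mem_union, Finset.mem_biUnion, Finset.mem_range,
        Finset.mem_image] at hp hq
      rcases hp with ⟨j, hjN, p0, hp0, rfl⟩ | ⟨p0, hp0, rfl⟩ <;>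
        rcases hq with ⟨j', hj'N, q0, hq0, rfl⟩ | ⟨q0, hq0, rfl⟩
      · obtain ⟨hwi, hwe⟩ := memF j p0 hp0 w hwp
        obtain ⟨hwi', hwe'⟩ := memF j' q0 hq0 w hwq
        have hjj : j = j' := by omega
        subst hjj
        by_cases hpq0 : p0 = q0
        · exact hpq (by rw [hpq0])
        · exact Set.disjoint_left.mp (hS2 j p0 hp0 q0 hq0 hpq0) hwe hwe'
      · obtain ⟨hwi, _⟩ := memF j p0 hp0 w hwp
        obtain ⟨hwi', _⟩ := memG q0 hq0 w hwq
        omega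
      · obtain ⟨hwi, _⟩ := memG p0 hp0 w hwp
        obtain ⟨hwi', _⟩ := memF j' q0 hq0 w hwq
        omega
      · obtain ⟨_, hwe⟩ := memG p0 hp0 w hwp
        obtain ⟨_, hwe'⟩ := memG q0 hq0 w hwq
        by_cases hpq0 : p0 = q0
        · exact hpq (by rw [hpq0])
        · exact Set.disjoint_left.mp (hS2 N p0 hp0 q0 hq0 hpq0) hwe hwe'
    -- the union is L
    · have zero_i : ∀ j, ∀ p0 ∈ S j, p0.1 i = 0 ∧ i ∉ p0.2 := by
        intro j p0 hp0
        constructor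
        · by_contra h
          exact hi ((hS1 j p0 hp0).1 i h)
        · intro h
          exact hi ((hS1 j p0 hp0).2 h)
      ext w
      simp only [Set.mem_iUnion, exists_prop]
      constructor
      · rintro ⟨p, hp, hwp⟩
        rw [Finset.mem_coe] at hp
        simp only [Finset.mem_union, Finset.mem_biUnion, Finset.mem_range,
          Finset.mem_image] at hp
        rcases hp with ⟨j, hjN, p0, hp0, rfl⟩ | ⟨p0, hp0, rfl⟩
        · -- w comes from the j-slice, j < N
          obtain ⟨v, hv, rfl⟩ := hwp
          rw [add_right_comm]
          have hmem : p0.1 + v ∈ M j := by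
            rw [← hS3 j]
            exact Set.mem_iUnion₂.mpr ⟨p0, hp0, v, hv, rfl⟩
          exact hmem.2
        · -- w comes from the stabilized slice
          obtain ⟨v, hv, rfl⟩ := hwp
          have hui : p0.1 i = 0 := (zero_i N p0 hp0).1
          -- w = (p0.1 + erase i v) + single i (N + v i)
          have hsplit : p0.1 + Finsupp.single i N + v
              = (p0.1 + v.erase i) + Finsupp.single i (N + v i) := by
            ext l
            by_cases hli : l = i
            · subst hli
              simp [Finsupp.add_apply, Finsupp.single_apply, Finsupp.erase_apply, add_assoc]
            · simp [Finsupp.add_apply, Finsupp.single_apply, Finsupp.erase_apply, hli,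
                Ne.symm hli]
          rw [hsplit]
          have hmem : p0.1 + v.erase i ∈ M N := by
            rw [← hS3 N]
            refine Set.mem_iUnion₂.mpr ⟨p0, hp0, v.erase i, ?_, rfl⟩
            intro l hl
            rw [Finsupp.erase_apply] at hl
            by_cases hli : l = i
            · simp [hli] at hl
            · rcases Finset.mem_insert.mp (hv l (by simpa [hli] using hl)) with h | h
              · exact absurd h hli
              · exact h
          exact (hN (N + v i) (by omega) _).mpr hmem.2
      · intro hw
        set j := w i with hj
        set w0 := w.erase i with hw0
        have hw0supp : ∀ l, w0 l ≠ 0 → l ∈ T' := by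
          intro l hl
          rw [hw0, Finsupp.erase_apply] at hl
          by_cases hli : l = i
          · simp [hli] at hl
          · rcases Finset.mem_insert.mp
              (hsupp w hw l (by simpa [hli] using hl)) with h | h
            · exact absurd h hli
            · exact h
        have hwsum : w0 + Finsupp.single i j = w := by
          rw [hw0, hj]
          exact Finsupp.erase_add_single i w
        by_cases hjN : j < N
        · have hmem : w0 ∈ M j := ⟨hw0supp, by rw [hwsum]; exact hw⟩
          rw [← hS3 j] at hmem
          obtain ⟨p0, hp0, hw0mem⟩ := Set.mem_iUnion₂.mp hmem
          refine ⟨(p0.1 + Finsupp.single i j, p0.2), ?_, ?_⟩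
          · rw [Finset.mem_coe]
            simp only [Finset.mem_union, Finset.mem_biUnion, Finset.mem_range,
              Finset.mem_image]
            exact Or.inl ⟨j, hjN, p0, hp0, rfl⟩
          · obtain ⟨v, hv, hveq⟩ := hw0mem
            refine ⟨v, hv, ?_⟩
            rw [← hwsum, hveq, add_right_comm]
        · -- j ≥ N : use the stabilized slice
          push_neg at hjN
          have hmem : w0 ∈ M N := by
            refine ⟨hw0supp, ?_⟩
            refine (hN j hjN w0).mp ?_
            rw [hwsum]
            exact hw
          rw [← hS3 N] at hmem
          obtain ⟨p0, hp0, hw0mem⟩ := Set.mem_iUnion₂.mp hmem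
          refine ⟨(p0.1 + Finsupp.single i N, insert i p0.2), ?_, ?_⟩
          · rw [Finset.mem_coe]
            simp only [Finset.mem_union, Finset.mem_biUnion, Finset.mem_range,
              Finset.mem_image]
            exact Or.inr ⟨p0, hp0, rfl⟩
          · obtain ⟨v, hv, hveq⟩ := hw0mem
            refine ⟨v + Finsupp.single i (j - N), ?_, ?_⟩
            · intro l hl
              simp only [Finsupp.add_apply, Finsupp.single_apply] at hl
              by_cases hli : l = i
              · simp [hli]
              · simp only [if_neg (Ne.symm hli)] at hl
                exact Finset.mem_insert_of_mem (hv l (by omega))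
            · have : p0.1 + Finsupp.single i N + (v + Finsupp.single i (j - N))
                  = (p0.1 + v) + (Finsupp.single i N + Finsupp.single i (j - N)) := by abel
              rw [this, ← Finsupp.single_add, ← hveq]
              have : N + (j - N) = j := by omega
              rw [this, hwsum]

/-- every proper monomial ideal `I` in `S = k[x_1,…,x_n]` admits a finite
Stanley decomposition of `S/I`. -/
theorem exists_stanley_decomposition {k : Type} [Field k] {n : ℕ}
    (I : Ideal (MvPolynomial (Fin n) k)) (hmon : IsMonomialIdeal I) (hproper : I ≠ ⊤) :
    ∃ 𝔖 : Finset ((Fin n →₀ ℕ) × Finset (Fin n)), IsStanleyDecomp I 𝔖 := by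
  classical
  set L : Set (Fin n →₀ ℕ) := {w | monomial w (1 : k) ∉ I} with hL
  have hdown : ∀ w v : Fin n →₀ ℕ, w + v ∈ L → w ∈ L := by
    intro w v hwv hwmem
    apply hwv
    have : (monomial (w + v) (1 : k)) = monomial v (1 : k) * monomial w (1 : k) := by
      rw [monomial_mul, mul_one, add_comm]
    rw [this]
    exact Ideal.mul_mem_left I _ hwmem
  obtain ⟨𝔖, _, hdisj, hunion⟩ :=
    stanley_aux (Finset.univ : Finset (Fin n)) L
      (fun w _ j _ => Finset.mem_univ j) hdown
  exact ⟨𝔖, hdisj, hunion⟩
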